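/- Fix ζ₀ on the unit circle, a positive integer m, an integer ℓ with 0 ≤ ℓ ≤ m − 1, let a be analytic on a neighborhood of the closed unit disk with a zero of order at least m at ζ₀, and let g ∈ H². Then lim_{t → 1⁻} (a·g)^{(ℓ)}(t ζ₀) = 0. -/

import Mathlib

open Metric Filter

private lemma h2_pointwise_bound (c : ℕ → ℂ) (hsum : Summable fun k => ‖c k‖ ^ 2)
    (z : ℂ) (hz : ‖z‖ < 1) :
    ‖∑' k : ℕ, c k * z ^ k‖ ≤ ((∑' k : ℕ, ‖c k‖ ^ 2) + 1) / Real.sqrt (1 - ‖z‖) := by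
  set r := ‖z‖ with hr
  have hr0 : 0 ≤ r := norm_nonneg z
  have hv0 : 0 < Real.sqrt (1 - r) := Real.sqrt_pos.mpr (by linarith)
  set v := Real.sqrt (1 - r) with hvdef
  have hv2 : v ^ 2 = 1 - r := Real.sq_sqrt (by linarith)
  have hterm : ∀ k, ‖c k * z ^ k‖ ≤ (1/v) * ‖c k‖ ^ 2 + v * (r ^ 2) ^ k := by
    intro k
    have h1 : ‖c k * z ^ k‖ = ‖c k‖ * r ^ k := by
      rw [norm_mul, norm_pow]
    rw [h1]
    have h2 : (r ^ 2) ^ k = (r ^ k) ^ 2 := by ring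
    rw [h2]
    have := sq_nonneg (‖c k‖ - v * r ^ k)
    have hck : 0 ≤ ‖c k‖ := norm_nonneg _
    have hrk : 0 ≤ r ^ k := pow_nonneg hr0 k
    rw [← sub_nonneg, div_mul_eq_mul_div, one_mul]
    have key : 0 ≤ (‖c k‖ ^ 2 / v + v * (r ^ k) ^ 2 - ‖c k‖ * r ^ k) * v := by
      have hexp : (‖c k‖ ^ 2 / v + v * (r ^ k) ^ 2 - ‖c k‖ * r ^ k) * v
          = ‖c k‖ ^ 2 + v ^ 2 * (r ^ k) ^ 2 - ‖c k‖ * r ^ k * v := by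
        field_simp
      rw [hexp]
      nlinarith [sq_nonneg (‖c k‖ - v * r ^ k)]
    nlinarith [key, hv0]
  have hgeo : Summable (fun k : ℕ => (r ^ 2) ^ k) :=
    summable_geometric_of_lt_one (by positivity) (by nlinarith)
  have hmaj : Summable (fun k => (1/v) * ‖c k‖ ^ 2 + v * (r ^ 2) ^ k) :=
    (hsum.mul_left _).add (hgeo.mul_left v)
  have hsum1 : Summable fun k => ‖c k * z ^ k‖ :=
    Summable.of_nonneg_of_le (fun k => norm_nonneg _) hterm hmaj
  calc ‖∑' k : ℕ, c k * z ^ k‖ ≤ ∑' k : ℕ, ‖c k * z ^ k‖ := norm_tsum_le_tsum_norm hsum1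
    _ ≤ ∑' k : ℕ, ((1/v) * ‖c k‖ ^ 2 + v * (r ^ 2) ^ k) := Summable.tsum_le_tsum hterm hsum1 hmaj
    _ = (1/v) * (∑' k : ℕ, ‖c k‖ ^ 2) + v * (1 - r ^ 2)⁻¹ := by
        rw [Summable.tsum_add (hsum.mul_left _) (hgeo.mul_left v), tsum_mul_left, tsum_mul_left,
          tsum_geometric_of_lt_one (by positivity) (by nlinarith)]
    _ ≤ ((∑' k : ℕ, ‖c k‖ ^ 2) + 1) / v := by
        have hS : 0 ≤ ∑' k : ℕ, ‖c k‖ ^ 2 := tsum_nonneg fun k => sq_nonneg _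
        have h3 : v * (1 - r ^ 2)⁻¹ ≤ 1 / v := by
          rw [le_div_iff₀ hv0]
          have h4 : (1 : ℝ) - r ≤ 1 - r ^ 2 := by nlinarith
          have h5 : (1 - r ^ 2)⁻¹ ≤ (1 - r)⁻¹ := by
            apply inv_anti₀ (by linarith) h4
          calc v * (1 - r ^ 2)⁻¹ * v ≤ v * (1 - r)⁻¹ * v := by
                have := mul_le_mul_of_nonneg_left h5 hv0.le
                nlinarith [hv0.le]
            _ = 1 := by
                rw [show v * (1-r)⁻¹ * v = (v*v) * (1-r)⁻¹ by ring, ← sq, hv2,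
                  ← div_eq_mul_inv, div_self (by linarith : (1:ℝ) - r ≠ 0)]
        rw [add_div]
        calc 1/v * (∑' k : ℕ, ‖c k‖ ^ 2) + v * (1 - r^2)⁻¹
            ≤ 1/v * (∑' k : ℕ, ‖c k‖ ^ 2) + 1/v := by linarith
          _ = (∑' k : ℕ, ‖c k‖ ^ 2)/v + 1/v := by ring

private lemma cauchy_est' {f : ℂ → ℂ} {cc : ℂ} {ρ B : ℝ} (hρ : 0 < ρ) (hB : 0 ≤ B)
    (hf : DifferentiableOn ℂ f (closedBall cc ρ))
    (hbd : ∀ z ∈ sphere cc ρ, ‖f z‖ ≤ B) (n : ℕ) :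
    ‖iteratedDeriv n f cc‖ ≤ (n.factorial : ℝ) * B / ρ ^ n := by
  lift ρ to NNReal using hρ.le with ρ' hρ'
  have hρ0 : 0 < ρ' := by exact_mod_cast hρ
  have hP : HasFPowerSeriesOnBall f (cauchyPowerSeries f cc ρ') cc ρ' :=
    hf.hasFPowerSeriesOnBall hρ0
  have h1 : iteratedDeriv n f cc = iteratedFDeriv ℂ n f cc (fun _ => 1) := by
    rw [iteratedDeriv_eq_iteratedFDeriv]
  have h2 := hP.factorial_smul (1 : ℂ) n
  rw [h1, ← h2]
  have h3 : ‖(n.factorial : ℕ) • cauchyPowerSeries f cc ρ' n (fun _ => (1:ℂ))‖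
      = (n.factorial : ℝ) * ‖cauchyPowerSeries f cc ρ' n (fun _ => (1:ℂ))‖ := by
    rw [← Nat.cast_smul_eq_nsmul ℝ, norm_smul, Real.norm_natCast]
  rw [h3]
  have h4 : ‖cauchyPowerSeries f cc ρ' n (fun _ => (1:ℂ))‖ ≤ ‖cauchyPowerSeries f cc ρ' n‖ := by
    refine le_trans ((cauchyPowerSeries f cc ρ' n).le_opNorm _) ?_
    simp
  have h5 := norm_cauchyPowerSeries_le f cc ρ' n
  have hint : ∫ θ : ℝ in (0)..2 * Real.pi, ‖f (circleMap cc ρ' θ)‖ ≤ 2 * Real.pi * B := by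
    have hcont : Continuous fun θ : ℝ => ‖f (circleMap cc ρ' θ)‖ := by
      refine (hf.continuousOn.comp_continuous (continuous_circleMap cc ρ') ?_).norm
      intro θ
      exact sphere_subset_closedBall (circleMap_mem_sphere cc (by exact_mod_cast hρ.le) θ)
    calc ∫ θ : ℝ in (0)..2 * Real.pi, ‖f (circleMap cc ρ' θ)‖
        ≤ ∫ _ : ℝ in (0)..2 * Real.pi, B := by
          apply intervalIntegral.integral_mono_on Real.two_pi_pos.le
            (hcont.intervalIntegrable _ _) (intervalIntegrable_const)
          intro θ _
          exact hbd _ (circleMap_mem_sphere cc (by exact_mod_cast hρ.le) θ)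
      _ = 2 * Real.pi * B := by simp [mul_comm]
  have h6 : ‖cauchyPowerSeries f cc ρ' n‖ ≤ B * (ρ' : ℝ)⁻¹ ^ n := by
    refine h5.trans ?_
    have habs : |(ρ' : ℝ)| = (ρ' : ℝ) := abs_of_nonneg ρ'.coe_nonneg
    rw [habs]
    apply mul_le_mul_of_nonneg_right _ (by positivity)
    rw [inv_mul_le_iff₀ (by positivity)]
    exact hint.trans (by rw [mul_assoc])
  calc (n.factorial : ℝ) * ‖cauchyPowerSeries f cc ρ' n (fun _ => (1:ℂ))‖
      ≤ (n.factorial : ℝ) * (B * (ρ' : ℝ)⁻¹ ^ n) := by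
        exact mul_le_mul_of_nonneg_left (h4.trans h6) (by positivity)
    _ = (n.factorial : ℝ) * B / (ρ' : ℝ) ^ n := by rw [inv_pow]; ring

theorem stmt_12 (ζ₀ : ℂ) (hζ₀ : ‖ζ₀‖ = 1) (m : ℕ) (hm : 0 < m)
    (ℓ : ℕ) (hℓ : ℓ ≤ m - 1)
    (a h : ℂ → ℂ) (U : Set ℂ) (hU : IsOpen U) (hUb : closedBall (0 : ℂ) 1 ⊆ U)
    (hh : DifferentiableOn ℂ h U)
    (ha : ∀ z : ℂ, a z = (z - ζ₀) ^ m * h z)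
    (g : ℂ → ℂ) (c : ℕ → ℂ)
    (hsum : Summable fun k => ‖c k‖ ^ 2)
    (hg : ∀ z ∈ ball (0 : ℂ) 1, g z = ∑' k : ℕ, c k * z ^ k) :
    Tendsto (fun t : ℝ => iteratedDeriv ℓ (fun z => a z * g z) ((t : ℂ) * ζ₀))
      (nhdsWithin 1 (Set.Iio 1)) (nhds 0) := by
  have hball_U : ball (0:ℂ) 1 ⊆ U := ball_subset_closedBall.trans hUb
  set S2 := ∑' k : ℕ, ‖c k‖ ^ 2 with hS2def
  have hS2 : 0 ≤ S2 := tsum_nonneg fun k => sq_nonneg _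
  obtain ⟨M0, hM0⟩ := (isCompact_closedBall (0:ℂ) 1).exists_bound_of_continuousOn
      (hh.continuousOn.mono hUb)
  set M := max M0 0 with hMdef
  have hM : ∀ z ∈ closedBall (0:ℂ) 1, ‖h z‖ ≤ M := fun z hz => (hM0 z hz).trans (le_max_left _ _)
  have hMnn : 0 ≤ M := le_max_right _ _
  -- differentiability of g
  have hg_diff : DifferentiableOn ℂ g (ball (0:ℂ) 1) := by
    intro x hx
    have hx' : ‖x‖ < 1 := mem_ball_zero_iff.mp hx
    obtain ⟨r, hxr, hr1⟩ := exists_between hx'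
    have hr0 : 0 ≤ r := (norm_nonneg x).trans hxr.le
    have hmaj : Summable (fun k : ℕ => ‖c k‖ ^ 2 + r ^ k) :=
      hsum.add (summable_geometric_of_lt_one hr0 hr1)
    have hG : DifferentiableOn ℂ (fun w => ∑' k : ℕ, c k * w ^ k) (ball (0:ℂ) r) := by
      apply Complex.differentiableOn_tsum_of_summable_norm hmaj
        (fun k => ((differentiable_const (c k)).mul (differentiable_pow k)).differentiableOn)
        isOpen_ball
      intro k w hw
      have hw' : ‖w‖ < r := mem_ball_zero_iff.mp hw
      have h1 : ‖c k * w ^ k‖ = ‖c k‖ * ‖w‖ ^ k := by rw [norm_mul, norm_pow]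
      change ‖c k * w ^ k‖ ≤ _
      rw [h1]
      have h2 : ‖c k‖ * ‖w‖ ^ k ≤ ‖c k‖ * r ^ k := by
        apply mul_le_mul_of_nonneg_left (pow_le_pow_left₀ (norm_nonneg w) hw'.le k) (norm_nonneg _)
      refine h2.trans ?_
      have hrk1 : r ^ k ≤ 1 := pow_le_one₀ hr0 hr1.le
      nlinarith [sq_nonneg (‖c k‖ - r ^ k), norm_nonneg (c k), pow_nonneg hr0 k,
        sq_nonneg (r ^ k)]
    have hGg : DifferentiableOn ℂ g (ball (0:ℂ) r) := by
      apply hG.congr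
      intro w hw
      exact hg w (ball_subset_ball hr1.le hw)
    exact ((hGg.differentiableAt (isOpen_ball.mem_nhds
      (mem_ball_zero_iff.mpr hxr))).differentiableWithinAt)
  have hf_diff : DifferentiableOn ℂ (fun z => a z * g z) (ball (0:ℂ) 1) := by
    have h1 : DifferentiableOn ℂ (fun z => (z - ζ₀)^m * h z * g z) (ball (0:ℂ) 1) :=
      ((((differentiable_id.sub_const ζ₀).pow m).differentiableOn).mul (hh.mono hball_U)).mul
        hg_diff
    exact h1.congr (fun z _ => by rw [ha z])
  set K := (ℓ.factorial : ℝ) * ((3/2)^m * (2^ℓ * (Real.sqrt 2 * (M * (S2+1))))) with hKdef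
  have hK0 : 0 ≤ K := by positivity
  apply squeeze_zero_norm' (a := fun t : ℝ => K * Real.sqrt (1 - t))
  · filter_upwards [Ioo_mem_nhdsLT_of_mem (show (1:ℝ) ∈ Set.Ioc 0 1 by norm_num)] with t ht
    obtain ⟨ht0, ht1⟩ := ht
    set u := 1 - t with hu
    have hu0 : 0 < u := by rw [hu]; linarith
    have hu1 : u ≤ 1 := by rw [hu]; linarith
    have hsu : 0 < Real.sqrt u := Real.sqrt_pos.mpr hu0
    set cc := (t:ℂ) * ζ₀ with hcc
    have hncc : ‖cc‖ = t := by
      rw [hcc, norm_mul, hζ₀, mul_one, Complex.norm_real, Real.norm_eq_abs, abs_of_pos ht0]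
    have hsub : closedBall cc (u/2) ⊆ ball (0:ℂ) 1 := by
      intro z hz
      rw [mem_closedBall, dist_eq_norm] at hz
      rw [mem_ball_zero_iff]
      calc ‖z‖ = ‖(z - cc) + cc‖ := by ring_nf
        _ ≤ ‖z - cc‖ + ‖cc‖ := norm_add_le _ _
        _ ≤ u/2 + t := by rw [hncc]; linarith
        _ < 1 := by rw [hu]; linarith [hu0]
    set B := (3/2*u)^m * (M * ((S2+1) * (Real.sqrt 2 / Real.sqrt u))) with hBdef
    have hBnn : 0 ≤ B := by positivity
    have hsph : ∀ z ∈ sphere cc (u/2), ‖a z * g z‖ ≤ B := by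
      intro z hz
      rw [mem_sphere_iff_norm] at hz
      have hzb : z ∈ ball (0:ℂ) 1 := hsub (by rw [mem_closedBall, dist_eq_norm, hz])
      have hz1 : ‖z‖ < 1 := mem_ball_zero_iff.mp hzb
      have hz2 : ‖z‖ ≤ 1 - u/2 := by
        calc ‖z‖ = ‖(z - cc) + cc‖ := by ring_nf
          _ ≤ ‖z - cc‖ + ‖cc‖ := norm_add_le _ _
          _ = u/2 + t := by rw [hz, hncc]
          _ = 1 - u/2 := by rw [hu]; ring
      have hzeta : ‖z - ζ₀‖ ≤ 3/2*u := by
        have h1 : ‖cc - ζ₀‖ = u := by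
          rw [hcc, show (t:ℂ) * ζ₀ - ζ₀ = ((1 - t : ℝ) : ℂ) * (-ζ₀) by push_cast; ring,
            norm_mul, norm_neg, hζ₀, mul_one, Complex.norm_real, Real.norm_eq_abs,
            abs_of_pos (by linarith : (0:ℝ) < 1 - t), hu]
        calc ‖z - ζ₀‖ = ‖(z - cc) + (cc - ζ₀)‖ := by ring_nf
          _ ≤ ‖z - cc‖ + ‖cc - ζ₀‖ := norm_add_le _ _
          _ = u/2 + u := by rw [hz, h1]
          _ ≤ 3/2*u := by linarith
      have hhz : ‖h z‖ ≤ M := hM z (ball_subset_closedBall hzb)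
      have hgz : ‖g z‖ ≤ (S2+1) * (Real.sqrt 2 / Real.sqrt u) := by
        have hb1 : ‖g z‖ ≤ (S2+1) / Real.sqrt (1 - ‖z‖) := by
          rw [hg z hzb]
          exact h2_pointwise_bound c hsum z hz1
        refine hb1.trans ?_
        have h2 : Real.sqrt (u/2) ≤ Real.sqrt (1 - ‖z‖) := by
          apply Real.sqrt_le_sqrt; linarith
        have h3 : (S2+1) / Real.sqrt (1 - ‖z‖) ≤ (S2+1) / Real.sqrt (u/2) := by
          apply div_le_div_of_nonneg_left (by linarith) (Real.sqrt_pos.mpr (by linarith)) h2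
        refine h3.trans ?_
        refine le_of_eq ?_
        rw [Real.sqrt_div hu0.le 2, div_div_eq_mul_div, mul_div_assoc]
      calc ‖a z * g z‖ = ‖z - ζ₀‖^m * ‖h z‖ * ‖g z‖ := by
            rw [ha z, norm_mul, norm_mul, norm_pow]
        _ ≤ (3/2*u)^m * M * ((S2+1) * (Real.sqrt 2 / Real.sqrt u)) := by
            gcongr
        _ = B := by rw [hBdef]; try ring
    have hca := cauchy_est' (show (0:ℝ) < u/2 by linarith) hBnn (hf_diff.mono hsub) hsph ℓ
    refine hca.trans ?_
    have heq : (ℓ.factorial:ℝ) * B / (u/2)^ℓ = K * (u^m / (u^ℓ * Real.sqrt u)) := by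
      rw [hBdef, hKdef, mul_pow (3/2) u m, div_pow u 2 ℓ]
      field_simp
    rw [heq]
    have hpow : u^m ≤ u^ℓ * u := by
      have h1 : u ^ m ≤ u ^ (ℓ+1) := pow_le_pow_of_le_one hu0.le hu1 (by omega)
      rwa [pow_succ] at h1
    have hfin : u^m/(u^ℓ * Real.sqrt u) ≤ Real.sqrt u := by
      rw [div_le_iff₀ (by positivity)]
      calc u^m ≤ u^ℓ * u := hpow
        _ = Real.sqrt u * (u^ℓ * Real.sqrt u) := by
            rw [show Real.sqrt u * (u^ℓ * Real.sqrt u) = u^ℓ * (Real.sqrt u * Real.sqrt u) from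
              by ring, Real.mul_self_sqrt hu0.le]
    exact mul_le_mul_of_nonneg_left hfin hK0
  · have hc : Continuous fun t:ℝ => K * Real.sqrt (1-t) :=
      continuous_const.mul ((continuous_const.sub continuous_id).sqrt)
    exact (hc.tendsto' 1 0 (by simp)).mono_left nhdsWithin_le_nhds
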